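/- arXiv:0903.1818 — 4 statements merged into one kernel-verified Lean document; each statement's English description precedes it below -/
import Mathlib

section
/- For all n ∈ ℕ, the set S_n defined by the recursion S_0 = {(0,0)}, S_{i+1} = S_i ∪ (S_i + 2^i·V) where V = {(1,0),(0,1)} and A + cB = {m + c·n : m ∈ A, n ∈ B}, has cardinality |S_n| = 3^n. -/
/-- `sadd A c B = A + c·B = {a + c•b : a ∈ A, b ∈ B}` in ℤ². -/
def sadd (A : Set (ℤ × ℤ)) (c : ℤ) (B : Set (ℤ × ℤ)) : Set (ℤ × ℤ) :=
  {p | ∃ a ∈ A, ∃ b ∈ B, p = a + c • b}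

def V : Set (ℤ × ℤ) := {(1, 0), (0, 1)}

/-- Stages of the standard discrete Sierpinski triangle. -/
def Sst : ℕ → Set (ℤ × ℤ)
  | 0 => {(0, 0)}
  | i + 1 => Sst i ∪ sadd (Sst i) (2 ^ i) V

lemma sadd_V (A : Set (ℤ × ℤ)) (c : ℤ) :
    sadd A c V = (fun a => a + (c, 0)) '' A ∪ (fun a => a + (0, c)) '' A := by
  ext p
  constructor
  · rintro ⟨a, ha, b, hb, rfl⟩
    rcases hb with rfl | rfl
    · left; exact ⟨a, ha, by simp [Prod.ext_iff]⟩
    · right; exact ⟨a, ha, by simp [Prod.ext_iff]⟩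
  · rintro (⟨a, ha, rfl⟩ | ⟨a, ha, rfl⟩)
    · exact ⟨a, ha, (1, 0), Or.inl rfl, by simp [Prod.ext_iff]⟩
    · exact ⟨a, ha, (0, 1), Or.inr rfl, by simp [Prod.ext_iff]⟩

lemma key (n : ℕ) : (Sst n).Finite ∧
    (∀ p ∈ Sst n, 0 ≤ p.1 ∧ 0 ≤ p.2 ∧ p.1 + p.2 < 2 ^ n) ∧
    (Sst n).ncard = 3 ^ n := by
  induction n with
  | zero =>
    refine ⟨Set.finite_singleton _, ?_, by simp [Sst]⟩
    rintro p hp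
    simp only [Sst, Set.mem_singleton_iff] at hp
    subst hp; norm_num
  | succ n ih =>
    obtain ⟨hfin, hbd, hcard⟩ := ih
    set A := Sst n with hA
    set B := (fun a => a + ((2:ℤ) ^ n, 0)) '' A with hB
    set C := (fun a => a + (0, (2:ℤ) ^ n)) '' A with hC
    have hSst : Sst (n + 1) = A ∪ (B ∪ C) := by
      show A ∪ sadd A (2 ^ n) V = _
      rw [sadd_V]
    have hinj1 : Function.Injective (fun a : ℤ × ℤ => a + ((2:ℤ) ^ n, 0)) :=
      add_left_injective _
    have hinj2 : Function.Injective (fun a : ℤ × ℤ => a + (0, (2:ℤ) ^ n)) :=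
      add_left_injective _
    have hBfin : B.Finite := hfin.image _
    have hCfin : C.Finite := hfin.image _
    have hBcard : B.ncard = 3 ^ n := by
      rw [hB, Set.ncard_image_of_injective _ hinj1, hcard]
    have hCcard : C.ncard = 3 ^ n := by
      rw [hC, Set.ncard_image_of_injective _ hinj2, hcard]
    have hpow : (0:ℤ) < 2 ^ n := by positivity
    -- disjointness
    have hdisjBC : Disjoint B C := by
      rw [Set.disjoint_left]
      rintro p ⟨a, ha, rfl⟩ ⟨b, hb, heq⟩
      have hb2 := (hbd b hb).2.1
      have ha2 := (hbd a ha).2.2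
      have : b.2 + 2 ^ n = a.2 := by simpa using congrArg Prod.snd heq
      have ha1 := (hbd a ha).1
      omega
    have hdisjA : Disjoint A (B ∪ C) := by
      rw [Set.disjoint_left]
      rintro p hp (⟨a, ha, rfl⟩ | ⟨a, ha, rfl⟩)
      · have h1 := (hbd _ hp).2.2
        have h2 := (hbd a ha).2.1
        have : (a + ((2:ℤ)^n, 0)).1 = a.1 + 2 ^ n := rfl
        have h3 := (hbd a ha).1
        simp only [Prod.fst_add, Prod.snd_add] at h1 ⊢
        omega
      · have h1 := (hbd _ hp).2.2
        have h2 := (hbd a ha).1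
        have h3 := (hbd a ha).2.1
        simp only [Prod.fst_add, Prod.snd_add] at h1 ⊢
        omega
    have hcard' : (Sst (n+1)).ncard = 3 ^ (n+1) := by
      rw [hSst, Set.ncard_union_eq hdisjA hfin (hBfin.union hCfin),
        Set.ncard_union_eq hdisjBC hBfin hCfin, hcard, hBcard, hCcard]
      ring
    refine ⟨by rw [hSst]; exact hfin.union (hBfin.union hCfin), ?_, hcard'⟩
    rw [hSst]
    rintro p (hp | ⟨a, ha, rfl⟩ | ⟨a, ha, rfl⟩)
    · obtain ⟨h1, h2, h3⟩ := hbd p hp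
      have : (2:ℤ) ^ n < 2 ^ (n+1) := by
        rw [pow_succ]; omega
      exact ⟨h1, h2, by omega⟩
    · obtain ⟨h1, h2, h3⟩ := hbd a ha
      simp only [Prod.fst_add, Prod.snd_add]
      have : (2:ℤ) ^ (n+1) = 2 ^ n + 2 ^ n := by rw [pow_succ]; ring
      omega
    · obtain ⟨h1, h2, h3⟩ := hbd a ha
      simp only [Prod.fst_add, Prod.snd_add]
      have : (2:ℤ) ^ (n+1) = 2 ^ n + 2 ^ n := by rw [pow_succ]; ring
      omega

theorem stmt0 (n : ℕ) : (Sst n).ncard = 3 ^ n := (key n).2.2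
end

section
/- The standard discrete Sierpinski triangle 𝐒 = ⋃_{i} S_i equals the set of all (k,l) ∈ ℕ² such that the binomial coefficient C(k+l, k) is odd. -/
lemma land_zero_iff (k l : ℕ) :
    k &&& l = 0 ↔ ∀ j, ¬(k.testBit j = true ∧ l.testBit j = true) := by
  constructor
  · intro h j ⟨hk, hl⟩
    have h2 := Nat.testBit_land k l j
    rw [h, Nat.zero_testBit, hk, hl] at h2
    simp at h2
  · intro h
    apply Nat.eq_of_testBit_eq
    intro j
    rw [Nat.testBit_land, Nat.zero_testBit]
    have := h j
    cases hk : k.testBit j <;> cases hl : l.testBit j <;> simp_all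

lemma land_succ_iff (k l : ℕ) (h : ¬(k % 2 = 1 ∧ l % 2 = 1)) :
    k &&& l = 0 ↔ (k / 2) &&& (l / 2) = 0 := by
  rw [land_zero_iff, land_zero_iff]
  constructor
  · intro hh j
    have := hh (j + 1)
    simpa [Nat.testBit_add_one] using this
  · intro hh j
    cases j with
    | zero =>
      simp only [Nat.testBit_zero, decide_eq_true_eq]
      exact h
    | succ j => simpa [Nat.testBit_add_one] using hh j

lemma keylemma : ∀ n k l : ℕ, k + l ≤ n → (Odd ((k + l).choose k) ↔ k &&& l = 0) := by
  intro n
  induction n with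
  | zero =>
    intro k l h
    have hk : k = 0 := by omega
    have hl : l = 0 := by omega
    subst hk; subst hl
    simp
  | succ n ih =>
    intro k l h
    by_cases h0 : k + l = 0
    · have hk : k = 0 := by omega
      have hl : l = 0 := by omega
      subst hk; subst hl
      simp
    · have hmod := @Choose.choose_modEq_choose_mod_mul_choose_div_nat (k + l) k 2 ⟨Nat.prime_two⟩
      unfold Nat.ModEq at hmod
      by_cases hc : k % 2 = 1 ∧ l % 2 = 1
      · -- carry: binomial is even, and bit 0 collides
        have h1 : (k + l) % 2 = 0 := by omega
        rw [h1] at hmod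
        have h2 : Nat.choose 0 (k % 2) = 0 := by rw [hc.1]; rfl
        rw [h2, zero_mul] at hmod
        simp only [Nat.zero_mod] at hmod
        constructor
        · intro hodd
          rw [Nat.odd_iff] at hodd
          omega
        · intro hland
          exfalso
          rw [land_zero_iff] at hland
          refine hland 0 ⟨?_, ?_⟩ <;> simp [Nat.testBit_zero, hc.1, hc.2]
      · have h1 : (k + l) % 2 = k % 2 + l % 2 := by omega
        have h2 : (k + l) / 2 = k / 2 + l / 2 := by omega
        have h3 : (k % 2 + l % 2).choose (k % 2) = 1 := by
          have hk2 := Nat.mod_two_eq_zero_or_one k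
          have hl2 := Nat.mod_two_eq_zero_or_one l
          rcases hk2 with hk2 | hk2 <;> rcases hl2 with hl2 | hl2 <;>
            simp [hk2, hl2] at hc ⊢
        rw [h1, h2, h3, one_mul] at hmod
        have hih := ih (k / 2) (l / 2) (by omega)
        rw [land_succ_iff k l hc]
        rw [← hih, Nat.odd_iff, Nat.odd_iff, hmod]

lemma testBit_high {i k : ℕ} (h1 : 2 ^ i ≤ k) (h2 : k < 2 ^ (i + 1)) :
    k.testBit i = true := by
  rw [Nat.testBit_eq_decide_div_mod_eq]
  have : k / 2 ^ i = 1 := by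
    rw [pow_succ] at h2
    exact Nat.div_eq_of_lt_le (by omega) (by omega)
  simp [this]

lemma land_add_pow_left {i k l : ℕ} (hl : l < 2 ^ i) :
    ((2 ^ i + k) &&& l = 0) ↔ (k &&& l = 0) := by
  have key : ∀ j, l.testBit j = true → (2 ^ i + k).testBit j = k.testBit j := by
    intro j hj
    have hji : j < i := by
      by_contra hc
      have hlj : l < 2 ^ j :=
        lt_of_lt_of_le hl (Nat.pow_le_pow_right (by norm_num) (le_of_not_gt hc))
      rw [Nat.testBit_lt_two_pow hlj] at hj
      exact Bool.false_ne_true hj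
    exact Nat.testBit_two_pow_add_gt hji k
  rw [land_zero_iff, land_zero_iff]
  constructor
  · intro h j ⟨h1, h2⟩
    exact h j ⟨by rw [key j h2]; exact h1, h2⟩
  · intro h j ⟨h1, h2⟩
    exact h j ⟨by rw [← key j h2]; exact h1, h2⟩

lemma Sst_char (i : ℕ) :
    Sst i = {p : ℤ × ℤ | ∃ k l : ℕ, p = ((k : ℤ), (l : ℤ)) ∧
      k < 2 ^ i ∧ l < 2 ^ i ∧ k &&& l = 0} := by
  induction i with
  | zero =>
    ext p
    simp only [Sst, Set.mem_singleton_iff, Set.mem_setOf_eq, pow_zero, Nat.lt_one_iff]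
    constructor
    · rintro rfl; exact ⟨0, 0, by simp⟩
    · rintro ⟨k, l, rfl, rfl, rfl, -⟩; simp
  | succ i ih =>
    have hpow : (2 : ℕ) ^ (i + 1) = 2 ^ i + 2 ^ i := by rw [pow_succ]; omega
    ext p
    simp only [Sst, Set.mem_union, Set.mem_setOf_eq]
    constructor
    · rintro (hp | hp)
      · rw [ih] at hp
        obtain ⟨k, l, rfl, hk, hl, hkl⟩ := hp
        exact ⟨k, l, rfl, by omega, by omega, hkl⟩
      · obtain ⟨a, ha, b, hb, rfl⟩ := hp
        rw [ih] at ha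
        obtain ⟨k, l, rfl, hk, hl, hkl⟩ := ha
        rcases hb with rfl | rfl
        · refine ⟨k + 2 ^ i, l, ?_, by omega, by omega, ?_⟩
          · simp [Prod.ext_iff]
          · rw [Nat.add_comm, land_add_pow_left hl]; exact hkl
        · refine ⟨k, l + 2 ^ i, ?_, by omega, by omega, ?_⟩
          · simp [Prod.ext_iff]
          · rw [Nat.land_comm, Nat.add_comm, land_add_pow_left hk, Nat.land_comm]
            exact hkl
    · rintro ⟨k, l, rfl, hk, hl, hkl⟩
      by_cases hk' : k < 2 ^ i <;> by_cases hl' : l < 2 ^ i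
      · left; rw [ih]; exact ⟨k, l, rfl, hk', hl', hkl⟩
      · -- l ≥ 2^i
        right
        push_neg at hl'
        refine ⟨((k : ℤ), ((l - 2 ^ i : ℕ) : ℤ)), ?_, (0, 1), by simp [V], ?_⟩
        · rw [ih]
          refine ⟨k, l - 2 ^ i, rfl, hk', by omega, ?_⟩
          have := (Nat.land_comm k l) ▸ hkl
          have h2 : (2 ^ i + (l - 2 ^ i)) &&& k = 0 := by
            rwa [show 2 ^ i + (l - 2 ^ i) = l by omega]
          rw [Nat.land_comm]
          exact (land_add_pow_left hk').mp h2
        · simp [Prod.ext_iff]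
          rw [Nat.cast_sub hl']
          push_cast
          ring
      · right
        push_neg at hk'
        refine ⟨(((k - 2 ^ i : ℕ) : ℤ), (l : ℤ)), ?_, (1, 0), by simp [V], ?_⟩
        · rw [ih]
          refine ⟨k - 2 ^ i, l, rfl, by omega, hl', ?_⟩
          have h2 : (2 ^ i + (k - 2 ^ i)) &&& l = 0 := by
            rwa [show 2 ^ i + (k - 2 ^ i) = k by omega]
          exact (land_add_pow_left hl').mp h2
        · simp [Prod.ext_iff]
          rw [Nat.cast_sub hk']
          push_cast
          ring
      · exfalso
        push_neg at hk' hl'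
        rw [land_zero_iff] at hkl
        exact hkl i ⟨testBit_high hk' (by omega), testBit_high hl' (by omega)⟩

theorem stmt3 :
    (⋃ i, Sst i) =
      {p : ℤ × ℤ | ∃ k l : ℕ, p = ((k : ℤ), (l : ℤ)) ∧ Odd (Nat.choose (k + l) k)} := by
  ext p
  simp only [Set.mem_iUnion, Sst_char, Set.mem_setOf_eq]
  constructor
  · rintro ⟨i, k, l, rfl, hk, hl, hkl⟩
    exact ⟨k, l, rfl, (keylemma (k + l) k l le_rfl).mpr hkl⟩
  · rintro ⟨k, l, rfl, hodd⟩
    refine ⟨k + l, k, l, rfl, ?_, ?_, (keylemma (k + l) k l le_rfl).mp hodd⟩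
    · exact lt_of_le_of_lt (Nat.le_add_right k l) Nat.lt_two_pow_self
    · exact lt_of_le_of_lt (Nat.le_add_left l k) Nat.lt_two_pow_self
end

section
/- The zeta-dimension of the standard discrete Sierpinski triangle 𝐒 equals log₂ 3, where zeta-dimension of A ⊆ ℕ² is defined via Dim_ζ(A) = limsup_{n→∞} log₂|A ∩ {(i,j) : i+j ≤ n}| / log₂ n. -/
open Filter

/-- The standard discrete Sierpinski triangle as a subset of ℕ². -/
def SS : Set (ℕ × ℕ) := {p | Odd (Nat.choose (p.1 + p.2) p.1)}

open Finset

lemma odd_step (n k : ℕ) : Odd (Nat.choose n k) ↔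
    (Odd (Nat.choose (n % 2) (k % 2)) ∧ Odd (Nat.choose (n / 2) (k / 2))) := by
  have h := @Choose.choose_modEq_choose_mod_mul_choose_div_nat n k 2 ⟨Nat.prime_two⟩
  rw [Nat.odd_iff, h, ← Nat.odd_iff, Nat.odd_mul]

def TT (j : ℕ) : Finset (ℕ × ℕ) :=
  ((range (2 ^ j)) ×ˢ (range (2 ^ j))).filter
    (fun p => p.1 + p.2 < 2 ^ j ∧ Odd (Nat.choose (p.1 + p.2) p.1))

def BB : Finset (ℕ × ℕ) := {(0,0),(1,0),(0,1)}

lemma mem_TT {j : ℕ} {p : ℕ × ℕ} :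
    p ∈ TT j ↔ p.1 + p.2 < 2 ^ j ∧ Odd (Nat.choose (p.1 + p.2) p.1) := by
  simp only [TT, mem_filter, mem_product, mem_range]
  constructor
  · tauto
  · intro h; exact ⟨⟨by omega, by omega⟩, h⟩

lemma TT_card_succ (j : ℕ) : (TT (j+1)).card = 3 * (TT j).card := by
  have : (TT (j+1)).card = ((TT j) ×ˢ BB).card := by
    apply Finset.card_nbij' (fun p => ((p.1 / 2, p.2 / 2), (p.1 % 2, p.2 % 2)))
      (fun q => (2 * q.1.1 + q.2.1, 2 * q.1.2 + q.2.2))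
    · intro p hp
      rw [Finset.mem_coe, mem_TT] at hp
      obtain ⟨hlt, hodd⟩ := hp
      rw [odd_step] at hodd
      have hm1 : p.1 % 2 < 2 := Nat.mod_lt _ (by norm_num)
      have hm2 : p.2 % 2 < 2 := Nat.mod_lt _ (by norm_num)
      have hnb : ¬ (p.1 % 2 = 1 ∧ p.2 % 2 = 1) := by
        rintro ⟨h1, h2⟩
        have : (p.1 + p.2) % 2 = 0 := by omega
        rw [this, h1] at hodd
        simp [Nat.choose] at hodd
      have hsum2 : (p.1 + p.2) / 2 = p.1 / 2 + p.2 / 2 := by omega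
      rw [Finset.mem_coe, Finset.mem_product]
      constructor
      · rw [mem_TT]
        refine ⟨?_, ?_⟩
        · show p.1 / 2 + p.2 / 2 < 2 ^ j
          omega
        · show Odd (Nat.choose (p.1 / 2 + p.2 / 2) (p.1 / 2))
          rw [← hsum2]
          exact hodd.2
      · simp only [BB, Finset.mem_insert, Finset.mem_singleton, Prod.ext_iff]
        omega
    · intro q hq
      rw [Finset.mem_coe, Finset.mem_product, mem_TT] at hq
      obtain ⟨⟨hlt, hodd⟩, hb⟩ := hq
      simp only [BB, Finset.mem_insert, Finset.mem_singleton, Prod.ext_iff] at hb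
      rw [Finset.mem_coe, mem_TT]
      constructor
      · simp only []
        omega
      · rw [odd_step]
        constructor
        · rcases hb with ⟨h1,h2⟩|⟨h1,h2⟩|⟨h1,h2⟩ <;>
            simp only [h1, h2] <;> norm_num <;> decide
        · have e1 : (2 * q.1.1 + q.2.1 + (2 * q.1.2 + q.2.2)) / 2 = q.1.1 + q.1.2 := by omega
          have e2 : (2 * q.1.1 + q.2.1) / 2 = q.1.1 := by omega
          rw [e1, e2]; exact hodd
    · intro p hp
      simp only [Prod.ext_iff]
      omega
    · intro q hq
      rw [Finset.mem_coe, Finset.mem_product] at hq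
      have hb := hq.2
      simp only [BB, Finset.mem_insert, Finset.mem_singleton, Prod.ext_iff] at hb
      simp only [Prod.ext_iff]
      omega
  rw [this, Finset.card_product, show BB.card = 3 by decide]
  omega

lemma TT_card (j : ℕ) : (TT j).card = 3 ^ j := by
  induction j with
  | zero => decide
  | succ j ih => rw [TT_card_succ, ih]; ring

def FF (n : ℕ) : Finset (ℕ × ℕ) :=
  ((range (n+1)) ×ˢ (range (n+1))).filter
    (fun p => p.1 + p.2 ≤ n ∧ Odd (Nat.choose (p.1 + p.2) p.1))

lemma mem_FF {n : ℕ} {p : ℕ × ℕ} :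
    p ∈ FF n ↔ p.1 + p.2 ≤ n ∧ Odd (Nat.choose (p.1 + p.2) p.1) := by
  simp only [FF, mem_filter, mem_product, mem_range]
  constructor
  · tauto
  · intro h; exact ⟨⟨by omega, by omega⟩, h⟩

lemma set_eq (n : ℕ) : {p ∈ SS | p.1 + p.2 ≤ n} = ↑(FF n) := by
  ext p
  simp only [Set.mem_setOf_eq, Finset.coe_filter, SS, Set.mem_setOf_eq, mem_FF,
    Finset.mem_coe]
  tauto

lemma ncard_eq (n : ℕ) : ({p ∈ SS | p.1 + p.2 ≤ n}).ncard = (FF n).card := by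
  rw [set_eq, Set.ncard_coe_finset]

lemma FF_lower {n : ℕ} (hn : n ≠ 0) : 3 ^ Nat.log 2 n ≤ (FF n).card := by
  rw [← TT_card]
  apply Finset.card_le_card
  intro p hp
  rw [mem_TT] at hp
  rw [mem_FF]
  have := Nat.pow_log_le_self 2 hn
  exact ⟨by omega, hp.2⟩

lemma FF_upper (n : ℕ) : (FF n).card ≤ 3 ^ (Nat.log 2 n + 1) := by
  rw [← TT_card]
  apply Finset.card_le_card
  intro p hp
  rw [mem_FF] at hp
  rw [mem_TT]
  have := Nat.lt_pow_succ_log_self one_lt_two n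
  exact ⟨by omega, hp.2⟩

lemma log2_tendsto : Tendsto (Nat.log 2) atTop atTop := by
  rw [tendsto_atTop_atTop]
  intro b
  refine ⟨2 ^ b, fun n hn => ?_⟩
  calc b = Nat.log 2 (2 ^ b) := (Nat.log_pow one_lt_two b).symm
    _ ≤ Nat.log 2 n := Nat.log_mono_right hn

lemma main_tendsto :
    Tendsto (fun n : ℕ => Real.logb 2 ((FF n).card) / Real.logb 2 n) atTop
      (nhds (Real.logb 2 3)) := by
  set c : ℝ := Real.logb 2 3 with hc
  have hcpos : 0 < c := Real.logb_pos one_lt_two (by norm_num)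
  -- lower and upper auxiliary functions
  have t1 : Tendsto (fun L : ℕ => (L : ℝ) * c / ((L : ℝ) + 1)) atTop (nhds c) := by
    have h := (tendsto_natCast_div_add_atTop (1 : ℝ)).const_mul c
    rw [mul_one] at h
    refine h.congr (fun L => ?_)
    ring
  have t2 : Tendsto (fun L : ℕ => ((L : ℝ) + 1) * c / (L : ℝ)) atTop (nhds c) := by
    have h : Tendsto (fun L : ℕ => ((1:ℝ) + 1/(L:ℝ)) * c) atTop (nhds (((1:ℝ)+0)*c)) :=
      (tendsto_const_nhds.add tendsto_one_div_atTop_nhds_zero_nat).mul_const c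
    rw [add_zero, one_mul] at h
    apply h.congr' ((eventually_ge_atTop 1).mono (fun L hL => ?_))
    have hL0 : (L : ℝ) ≠ 0 := Nat.cast_ne_zero.mpr (by omega)
    field_simp
    try ring
  have lo := t1.comp log2_tendsto
  have hi := t2.comp log2_tendsto
  apply tendsto_of_tendsto_of_tendsto_of_le_of_le' lo hi
  · filter_upwards [eventually_ge_atTop 2] with n hn
    simp only [Function.comp]
    set L := Nat.log 2 n with hLdef
    have hL1 : 1 ≤ L := Nat.log_pos one_lt_two hn
    have hnn : n ≠ 0 := by omega
    have hcard1 : ((3 : ℝ) ^ L) ≤ ((FF n).card : ℝ) := by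
      exact_mod_cast FF_lower hnn
    have hA1 : (L : ℝ) * c ≤ Real.logb 2 ((FF n).card) := by
      calc (L : ℝ) * c = Real.logb 2 ((3 : ℝ) ^ L) := by rw [Real.logb_pow]
        _ ≤ _ := Real.logb_le_logb_of_le one_lt_two (by positivity) hcard1
    have hD2 : Real.logb 2 n ≤ (L : ℝ) + 1 := by
      have hn2 : (n : ℝ) ≤ (2 : ℝ) ^ (L + 1) := by
        exact_mod_cast (Nat.lt_pow_succ_log_self one_lt_two n).le
      calc Real.logb 2 n ≤ Real.logb 2 ((2 : ℝ) ^ (L + 1)) :=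
            Real.logb_le_logb_of_le one_lt_two (by positivity) hn2
        _ = ((L : ℝ) + 1) := by
            rw [Real.logb_pow, Real.logb_self_eq_one one_lt_two]
            push_cast; ring
    have hDpos : 0 < Real.logb 2 n := Real.logb_pos one_lt_two (by exact_mod_cast hn)
    exact div_le_div₀ (le_trans (by positivity) hA1) hA1 hDpos hD2
  · filter_upwards [eventually_ge_atTop 2] with n hn
    simp only [Function.comp]
    set L := Nat.log 2 n with hLdef
    have hL1 : 1 ≤ L := Nat.log_pos one_lt_two hn
    have hnn : n ≠ 0 := by omega
    have hcard2 : ((FF n).card : ℝ) ≤ (3 : ℝ) ^ (L + 1) := by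
      exact_mod_cast FF_upper n
    have hcardpos : (0 : ℝ) < ((FF n).card : ℝ) := by
      have := FF_lower hnn
      have : 1 ≤ (FF n).card := le_trans (Nat.one_le_pow _ _ (by norm_num)) this
      exact_mod_cast this
    have hA2 : Real.logb 2 ((FF n).card) ≤ ((L : ℝ) + 1) * c := by
      calc Real.logb 2 ((FF n).card) ≤ Real.logb 2 ((3 : ℝ) ^ (L + 1)) :=
            Real.logb_le_logb_of_le one_lt_two hcardpos hcard2
        _ = ((L : ℝ) + 1) * c := by rw [Real.logb_pow]; push_cast; ring
    have hD1 : (L : ℝ) ≤ Real.logb 2 n := by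
      have h2L : ((2 : ℝ) ^ L) ≤ (n : ℝ) := by
        exact_mod_cast Nat.pow_log_le_self 2 hnn
      calc (L : ℝ) = Real.logb 2 ((2 : ℝ) ^ L) := by
            rw [Real.logb_pow, Real.logb_self_eq_one one_lt_two, mul_one]
        _ ≤ _ := Real.logb_le_logb_of_le one_lt_two (by positivity) h2L
    have hLpos : (0 : ℝ) < (L : ℝ) := by exact_mod_cast hL1
    exact div_le_div₀ (by positivity) hA2 hLpos hD1

theorem stmt11 :
    atTop.limsup
        (fun n : ℕ =>
          Real.logb 2 (({p ∈ SS | p.1 + p.2 ≤ n}).ncard) / Real.logb 2 n) =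
      Real.logb 2 3 := by
  have hfun : (fun n : ℕ =>
      Real.logb 2 (({p ∈ SS | p.1 + p.2 ≤ n}).ncard) / Real.logb 2 n) =
      (fun n : ℕ => Real.logb 2 ((FF n).card) / Real.logb 2 n) := by
    funext n; rw [ncard_eq]
  rw [hfun]
  exact main_tendsto.limsup_eq
end

section
/- For every n ∈ ℕ, the number of points of 𝐒 with coordinate sum at most 2^n − 1 equals 3^n; i.e., |{(k,l) ∈ ℕ² : k + l ≤ 2^n − 1 and C(k+l,k) odd}| = 3^n. -/
open Finset

/-- One step of Lucas' theorem mod 2. -/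
lemma odd_choose_step (n k : ℕ) :
    Odd (Nat.choose n k) ↔ Odd (Nat.choose (n / 2) (k / 2)) ∧ Odd (Nat.choose (n % 2) (k % 2)) := by
  have h := Choose.choose_modEq_choose_mod_mul_choose_div_nat (p := 2) (n := n) (k := k)
  rw [Nat.odd_iff, Nat.ModEq] at *
  rw [h, ← Nat.odd_iff, Nat.odd_mul, Nat.odd_iff, Nat.odd_iff, and_comm]

/-- Number of odd entries in row `m` of Pascal's triangle. -/
def rowCount (m : ℕ) : ℕ :=
  ((Finset.range (m + 1)).filter (fun k => Odd (Nat.choose m k))).card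

lemma rowCount_zero : rowCount 0 = 1 := by decide

lemma rowCount_two_mul (m : ℕ) : rowCount (2 * m) = rowCount m := by
  refine Finset.card_bij' (fun k _ => k / 2) (fun a _ => 2 * a) ?_ ?_ ?_ ?_
  · intro k hk
    simp only [Finset.mem_filter, Finset.mem_range] at hk ⊢
    obtain ⟨hk1, hk2⟩ := hk
    rw [odd_choose_step] at hk2
    have h0 : (2 * m) / 2 = m := by omega
    have h1 : (2 * m) % 2 = 0 := by omega
    rw [h0, h1] at hk2
    exact ⟨by omega, hk2.1⟩
  · intro a ha
    simp only [Finset.mem_filter, Finset.mem_range] at ha ⊢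
    refine ⟨by omega, ?_⟩
    rw [odd_choose_step]
    have h0 : (2 * m) / 2 = m := by omega
    have h1 : (2 * m) % 2 = 0 := by omega
    have h2 : (2 * a) / 2 = a := by omega
    have h3 : (2 * a) % 2 = 0 := by omega
    rw [h0, h1, h2, h3]
    exact ⟨ha.2, by decide⟩
  · intro k hk
    simp only [Finset.mem_filter, Finset.mem_range] at hk
    obtain ⟨hk1, hk2⟩ := hk
    rw [odd_choose_step] at hk2
    have h1 : (2 * m) % 2 = 0 := by omega
    rw [h1] at hk2
    have : k % 2 = 0 := by
      rcases Nat.mod_two_eq_zero_or_one k with h | h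
      · exact h
      · rw [h] at hk2
        simpa using hk2.2
    show 2 * (k / 2) = k
    omega
  · intro a _
    show (2 * a) / 2 = a
    omega

lemma rowCount_two_mul_add_one (m : ℕ) : rowCount (2 * m + 1) = 2 * rowCount m := by
  have key : ∀ k, Odd (Nat.choose (2 * m + 1) k) ↔ Odd (Nat.choose m (k / 2)) := by
    intro k
    rw [odd_choose_step]
    have h0 : (2 * m + 1) / 2 = m := by omega
    have h1 : (2 * m + 1) % 2 = 1 := by omega
    rw [h0, h1]
    have : Odd (Nat.choose 1 (k % 2)) := by
      rcases Nat.mod_two_eq_zero_or_one k with h | h <;> rw [h] <;> decide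
    tauto
  have : rowCount (2 * m + 1) =
      (((Finset.range (m + 1)).filter (fun k => Odd (Nat.choose m k))) ×ˢ Finset.range 2).card := by
    refine Finset.card_bij' (fun k _ => (k / 2, k % 2)) (fun a _ => 2 * a.1 + a.2) ?_ ?_ ?_ ?_
    · intro k hk
      simp only [Finset.mem_filter, Finset.mem_range, Finset.mem_product] at hk ⊢
      obtain ⟨hk1, hk2⟩ := hk
      rw [key] at hk2
      exact ⟨⟨by omega, hk2⟩, by omega⟩
    · intro a ha
      simp only [Finset.mem_filter, Finset.mem_range, Finset.mem_product] at ha ⊢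
      obtain ⟨⟨ha1, ha2⟩, ha3⟩ := ha
      refine ⟨by omega, ?_⟩
      rw [key]
      have : (2 * a.1 + a.2) / 2 = a.1 := by omega
      rwa [this]
    · intro k _
      show 2 * (k / 2) + k % 2 = k
      omega
    · intro a ha
      simp only [Finset.mem_filter, Finset.mem_range, Finset.mem_product] at ha
      have : (2 * a.1 + a.2) / 2 = a.1 := by omega
      have h2 : (2 * a.1 + a.2) % 2 = a.2 := by omega
      simp [this, h2]
  rw [this, Finset.card_product, Finset.card_range, rowCount]
  ring

lemma sum_range_two_mul (f : ℕ → ℕ) (n : ℕ) :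
    ∑ i ∈ Finset.range (2 * n), f i = ∑ i ∈ Finset.range n, (f (2 * i) + f (2 * i + 1)) := by
  induction n with
  | zero => simp
  | succ n ih =>
    have : 2 * (n + 1) = (2 * n + 1) + 1 := by ring
    rw [this, Finset.sum_range_succ, Finset.sum_range_succ, ih, Finset.sum_range_succ]
    omega

lemma sum_rowCount (n : ℕ) : ∑ m ∈ Finset.range (2 ^ n), rowCount m = 3 ^ n := by
  induction n with
  | zero => simpa using rowCount_zero
  | succ n ih =>
    have : (2 : ℕ) ^ (n + 1) = 2 * 2 ^ n := by ring
    rw [this, sum_range_two_mul]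
    have : ∀ m ∈ Finset.range (2 ^ n),
        rowCount (2 * m) + rowCount (2 * m + 1) = 3 * rowCount m := by
      intro m _
      rw [rowCount_two_mul, rowCount_two_mul_add_one]; ring
    rw [Finset.sum_congr rfl this, ← Finset.mul_sum, ih]
    ring

theorem stmt12 (n : ℕ) :
    ({p : ℕ × ℕ | p.1 + p.2 ≤ 2 ^ n - 1 ∧ Odd (Nat.choose (p.1 + p.2) p.1)}).ncard =
      3 ^ n := by
  have hpow : 1 ≤ 2 ^ n := Nat.one_le_two_pow
  set F : Finset (ℕ × ℕ) := (Finset.range (2 ^ n) ×ˢ Finset.range (2 ^ n)).filter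
    (fun p => p.1 + p.2 ≤ 2 ^ n - 1 ∧ Odd (Nat.choose (p.1 + p.2) p.1)) with hF
  have hset : {p : ℕ × ℕ | p.1 + p.2 ≤ 2 ^ n - 1 ∧ Odd (Nat.choose (p.1 + p.2) p.1)} = ↑F := by
    ext p
    simp only [hF, Set.mem_setOf_eq, Finset.coe_filter, Finset.mem_product, Finset.mem_range,
      Set.mem_setOf_eq]
    constructor
    · intro h
      exact ⟨⟨by omega, by omega⟩, h⟩
    · exact fun h => h.2
  rw [hset, Set.ncard_coe_finset]
  rw [Finset.card_eq_sum_card_fiberwise (f := fun p => p.1 + p.2) (t := Finset.range (2 ^ n))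
    (fun p hp => by
      simp only [hF, Finset.mem_coe, Finset.mem_filter] at hp
      simp only [Finset.mem_coe, Finset.mem_range]
      omega)]
  rw [← sum_rowCount n]
  apply Finset.sum_congr rfl
  intro m hm
  simp only [Finset.mem_range] at hm
  rw [rowCount]
  refine Finset.card_bij' (fun p _ => p.1) (fun k _ => (k, m - k)) ?_ ?_ ?_ ?_
  · intro p hp
    simp only [hF, Finset.mem_filter, Finset.mem_product, Finset.mem_range] at hp ⊢
    obtain ⟨⟨_, ⟨_, hodd⟩⟩, heq⟩ := hp
    rw [heq] at hodd
    exact ⟨by omega, hodd⟩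
  · intro k hk
    simp only [hF, Finset.mem_filter, Finset.mem_product, Finset.mem_range] at hk ⊢
    obtain ⟨hk1, hk2⟩ := hk
    have hadd : k + (m - k) = m := by omega
    refine ⟨⟨⟨by omega, by omega⟩, by omega, ?_⟩, hadd⟩
    rwa [hadd]
  · intro p hp
    simp only [hF, Finset.mem_filter, Finset.mem_product, Finset.mem_range] at hp
    have h1 : p.1 + p.2 = m := hp.2
    have h2 : m - p.1 = p.2 := by omega
    simp [h2]
  · intro k _; rfl
end
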